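/- Let K ⊂ ℝ^d be a nondegenerate simplex with edge vectors t_{i,j} = x_j − x_i and normals n_i as above. Define T_{i,j} := t_{i,j} t_{i,j}^T and N_{i,j} := (1/(2(n_i·t_{i,j})(n_j·t_{i,j})))·(n_i n_j^T + n_j n_i^T) for 0 ≤ i < j ≤ d. Then T_{i,j} : N_{k,ℓ} = δ_{ik}δ_{jℓ} under the Frobenius inner product, and each of {T_{i,j}} and {N_{i,j}} is a basis of the space 𝕊 of symmetric d×d matrices. -/

import Mathlib

open Matrix Finset

/-- For a nondegenerate simplex with vertices `x 0, …, x d` and face normals `n i`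
(orthogonal to the opposite face), the symmetric tensors `T i j = t_{ij} t_{ij}ᵀ` and
`N i j = (2 (n i · t_{ij})(n j · t_{ij}))⁻¹ (n_i n_jᵀ + n_j n_iᵀ)` (for `i < j`) are dual
to each other under the Frobenius inner product, and each family is a basis of the space
`𝕊` of symmetric `d × d` matrices. -/
theorem stmt_15 (d : ℕ) (hd : 1 ≤ d)
    (x : Fin (d + 1) → (Fin d → ℝ)) (hx : AffineIndependent ℝ x)
    (n : Fin (d + 1) → (Fin d → ℝ))
    (horth : ∀ i j l : Fin (d + 1), j ≠ i → l ≠ i → n i ⬝ᵥ (x l - x j) = 0)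
    (hne : ∀ i j : Fin (d + 1), i ≠ j → n i ⬝ᵥ (x j - x i) ≠ 0) :
    let T : Fin (d + 1) → Fin (d + 1) → Matrix (Fin d) (Fin d) ℝ :=
      fun i j => Matrix.vecMulVec (x j - x i) (x j - x i)
    let N : Fin (d + 1) → Fin (d + 1) → Matrix (Fin d) (Fin d) ℝ :=
      fun i j => (2 * (n i ⬝ᵥ (x j - x i)) * (n j ⬝ᵥ (x j - x i)))⁻¹ •
        (Matrix.vecMulVec (n i) (n j) + Matrix.vecMulVec (n j) (n i))
    (∀ i j a b : Fin (d + 1), i < j → a < b →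
      ∑ p : Fin d, ∑ q : Fin d, T i j p q * N a b p q =
        (if i = a ∧ j = b then (1 : ℝ) else 0)) ∧
    LinearIndependent ℝ
      (fun pr : {pr : Fin (d + 1) × Fin (d + 1) // pr.1 < pr.2} => T pr.1.1 pr.1.2) ∧
    (∀ A : Matrix (Fin d) (Fin d) ℝ, A.IsSymm →
      A ∈ Submodule.span ℝ
        (Set.range fun pr : {pr : Fin (d + 1) × Fin (d + 1) // pr.1 < pr.2} =>
          T pr.1.1 pr.1.2)) ∧
    LinearIndependent ℝ
      (fun pr : {pr : Fin (d + 1) × Fin (d + 1) // pr.1 < pr.2} => N pr.1.1 pr.1.2) ∧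
    (∀ A : Matrix (Fin d) (Fin d) ℝ, A.IsSymm →
      A ∈ Submodule.span ℝ
        (Set.range fun pr : {pr : Fin (d + 1) × Fin (d + 1) // pr.1 < pr.2} =>
          N pr.1.1 pr.1.2)) := by
  intro T N
  -- the basic Frobenius computation
  have frob : ∀ (i j a b : Fin (d + 1)),
      ∑ p : Fin d, ∑ q : Fin d, T i j p q * N a b p q =
        (2 * (n a ⬝ᵥ (x b - x a)) * (n b ⬝ᵥ (x b - x a)))⁻¹ *
          (2 * ((n a ⬝ᵥ (x j - x i)) * (n b ⬝ᵥ (x j - x i)))) := by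
    intro i j a b
    set t : Fin d → ℝ := x j - x i with ht
    set c : ℝ := (2 * (n a ⬝ᵥ (x b - x a)) * (n b ⬝ᵥ (x b - x a)))⁻¹ with hc
    have h1 : ∀ p q : Fin d, T i j p q * N a b p q =
        c * ((n a p * t p) * (n b q * t q)) + c * ((n b p * t p) * (n a q * t q)) := by
      intro p q
      simp only [T, N, Matrix.smul_apply, Matrix.add_apply, Matrix.vecMulVec_apply,
        smul_eq_mul, ← hc, ← ht]
      ring
    have h2 : ∀ u v : Fin d → ℝ,
        ∑ p : Fin d, ∑ q : Fin d, c * ((u p * t p) * (v q * t q)) =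
          c * ((u ⬝ᵥ t) * (v ⬝ᵥ t)) := by
      intro u v
      rw [dotProduct, dotProduct, Finset.sum_mul_sum, Finset.mul_sum]
      exact Finset.sum_congr rfl fun p _ => by rw [Finset.mul_sum]
    calc ∑ p : Fin d, ∑ q : Fin d, T i j p q * N a b p q
        = (∑ p : Fin d, ∑ q : Fin d, c * ((n a p * t p) * (n b q * t q))) +
            ∑ p : Fin d, ∑ q : Fin d, c * ((n b p * t p) * (n a q * t q)) := by
          simp only [h1, Finset.sum_add_distrib]
      _ = c * ((n a ⬝ᵥ t) * (n b ⬝ᵥ t)) + c * ((n b ⬝ᵥ t) * (n a ⬝ᵥ t)) := by rw [h2, h2]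
      _ = c * (2 * ((n a ⬝ᵥ t) * (n b ⬝ᵥ t))) := by ring
  have key : ∀ i j a b : Fin (d + 1), i < j → a < b →
      ∑ p : Fin d, ∑ q : Fin d, T i j p q * N a b p q =
        (if i = a ∧ j = b then (1 : ℝ) else 0) := by
    intro i j a b hij hab
    rw [frob]
    have hz : ∀ m : Fin (d + 1), m ≠ i → m ≠ j → n m ⬝ᵥ (x j - x i) = 0 := by
      intro m h1 h2
      exact horth m i j (Ne.symm h1) (Ne.symm h2)
    by_cases hai : a = i
    · by_cases hbj : b = j
      · subst hai; subst hbj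
        rw [if_pos ⟨rfl, rfl⟩]
        have hα : n a ⬝ᵥ (x b - x a) ≠ 0 := hne a b hab.ne
        have hβ : n b ⬝ᵥ (x b - x a) ≠ 0 := by
          have := hne b a hab.ne'
          intro h
          apply this
          have : x a - x b = -(x b - x a) := by ring
          rw [this, dotProduct_neg, h, neg_zero]
        rw [show 2 * ((n a ⬝ᵥ (x b - x a)) * (n b ⬝ᵥ (x b - x a))) =
            2 * (n a ⬝ᵥ (x b - x a)) * (n b ⬝ᵥ (x b - x a)) by ring]
        exact inv_mul_cancel₀ (mul_ne_zero (mul_ne_zero two_ne_zero hα) hβ)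
      · have hbi : b ≠ i := fun h => hab.ne' (h.trans hai.symm)
        rw [hz b hbi hbj, mul_zero, mul_zero, mul_zero,
          if_neg (fun h => hbj h.2.symm)]
    · by_cases haj : a = j
      · have hjb : j < b := by rw [← haj]; exact hab
        have hbi : b ≠ i := (hij.trans hjb).ne'
        have hbj : b ≠ j := hjb.ne'
        rw [hz b hbi hbj, mul_zero, mul_zero, mul_zero,
          if_neg (fun h => hbj h.2.symm)]
      · rw [hz a hai haj, zero_mul, mul_zero, mul_zero,
          if_neg (fun h => hai h.1.symm)]
  -- pairing swap lemma
  have pairT : ∀ (g : {pr : Fin (d + 1) × Fin (d + 1) // pr.1 < pr.2} → ℝ)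
      (M : {pr : Fin (d + 1) × Fin (d + 1) // pr.1 < pr.2} → Matrix (Fin d) (Fin d) ℝ)
      (B : Matrix (Fin d) (Fin d) ℝ),
      ∑ p : Fin d, ∑ q : Fin d, (∑ pr, g pr • M pr) p q * B p q
        = ∑ pr, g pr * ∑ p : Fin d, ∑ q : Fin d, M pr p q * B p q := by
    intro g M B
    have e1 : ∀ p q : Fin d, (∑ pr, g pr • M pr) p q * B p q
        = ∑ pr, g pr * (M pr p q * B p q) := by
      intro p q
      rw [Matrix.sum_apply, Finset.sum_mul]
      exact Finset.sum_congr rfl fun pr _ => by simp [mul_assoc]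
    simp only [e1, Finset.mul_sum]
    calc ∑ p : Fin d, ∑ q : Fin d, ∑ pr, g pr * (M pr p q * B p q)
        = ∑ p : Fin d, ∑ pr, ∑ q : Fin d, g pr * (M pr p q * B p q) :=
          Finset.sum_congr rfl fun _ _ => Finset.sum_comm
      _ = ∑ pr, ∑ p : Fin d, ∑ q : Fin d, g pr * (M pr p q * B p q) :=
          Finset.sum_comm
  have hδT : ∀ (pr0 pr : {pr : Fin (d + 1) × Fin (d + 1) // pr.1 < pr.2}),
      ∑ p : Fin d, ∑ q : Fin d, T pr.1.1 pr.1.2 p q * N pr0.1.1 pr0.1.2 p q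
        = if pr = pr0 then 1 else 0 := by
    intro pr0 pr
    rw [key _ _ _ _ pr.2 pr0.2]
    congr 1
    simp [Subtype.ext_iff, Prod.ext_iff]
  have hδN : ∀ (pr0 pr : {pr : Fin (d + 1) × Fin (d + 1) // pr.1 < pr.2}),
      ∑ p : Fin d, ∑ q : Fin d, N pr.1.1 pr.1.2 p q * T pr0.1.1 pr0.1.2 p q
        = if pr = pr0 then 1 else 0 := by
    intro pr0 pr
    have : ∀ p q : Fin d, N pr.1.1 pr.1.2 p q * T pr0.1.1 pr0.1.2 p q
        = T pr0.1.1 pr0.1.2 p q * N pr.1.1 pr.1.2 p q := fun p q => mul_comm _ _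
    simp only [this]
    rw [key _ _ _ _ pr0.2 pr.2]
    congr 1
    simp only [eq_iff_iff]
    constructor
    · rintro ⟨h1, h2⟩
      exact Subtype.ext (Prod.ext_iff.mpr ⟨h1.symm, h2.symm⟩)
    · rintro rfl; exact ⟨rfl, rfl⟩
  have extract : ∀ (g : {pr : Fin (d + 1) × Fin (d + 1) // pr.1 < pr.2} → ℝ)
      (pr0 : {pr : Fin (d + 1) × Fin (d + 1) // pr.1 < pr.2}),
      ∑ pr, g pr * (if pr = pr0 then (1:ℝ) else 0) = g pr0 := by
    intro g pr0
    simp [mul_ite]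
  have hTli : LinearIndependent ℝ
      (fun pr : {pr : Fin (d + 1) × Fin (d + 1) // pr.1 < pr.2} => T pr.1.1 pr.1.2) := by
    rw [Fintype.linearIndependent_iff]
    intro g hg pr0
    have h0 : ∑ p : Fin d, ∑ q : Fin d,
        (∑ pr, g pr • T pr.1.1 pr.1.2) p q * N pr0.1.1 pr0.1.2 p q = 0 := by
      rw [hg]; simp
    rw [pairT] at h0
    simp only [hδT pr0] at h0
    rwa [extract] at h0
  have hNli : LinearIndependent ℝ
      (fun pr : {pr : Fin (d + 1) × Fin (d + 1) // pr.1 < pr.2} => N pr.1.1 pr.1.2) := by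
    rw [Fintype.linearIndependent_iff]
    intro g hg pr0
    have h0 : ∑ p : Fin d, ∑ q : Fin d,
        (∑ pr, g pr • N pr.1.1 pr.1.2) p q * T pr0.1.1 pr0.1.2 p q = 0 := by
      rw [hg]; simp
    rw [pairT] at h0
    simp only [hδN pr0] at h0
    rwa [extract] at h0
  -- span of the T family
  haveI : Nonempty (Fin d) := ⟨⟨0, hd⟩⟩
  have hTmem : ∀ (a b : Fin (d + 1)), a < b →
      T a b ∈ Submodule.span ℝ
        (Set.range fun pr : {pr : Fin (d + 1) × Fin (d + 1) // pr.1 < pr.2} =>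
          T pr.1.1 pr.1.2) :=
    fun a b hab => Submodule.subset_span ⟨⟨(a, b), hab⟩, rfl⟩
  have hspanT : ∀ A : Matrix (Fin d) (Fin d) ℝ, A.IsSymm →
      A ∈ Submodule.span ℝ
        (Set.range fun pr : {pr : Fin (d + 1) × Fin (d + 1) // pr.1 < pr.2} =>
          T pr.1.1 pr.1.2) := by
    have hv : LinearIndependent ℝ (fun j : Fin d => x j.succ - x 0) := by
      have h := (affineIndependent_iff_linearIndependent_vsub ℝ x 0).mp hx
      have hinj : Function.Injective
          (fun j : Fin d => (⟨j.succ, Fin.succ_ne_zero j⟩ : {y : Fin (d + 1) // y ≠ 0})) := by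
        intro a b hab
        have := congrArg Subtype.val hab
        exact Fin.succ_injective _ this
      have h2 := h.comp _ hinj
      exact h2
    set v : Fin d → Fin d → ℝ := fun j => x j.succ - x 0 with hv_def
    have hW : ∀ j k : Fin d,
        Matrix.vecMulVec (v j) (v k) + Matrix.vecMulVec (v k) (v j) ∈
          Submodule.span ℝ
            (Set.range fun pr : {pr : Fin (d + 1) × Fin (d + 1) // pr.1 < pr.2} =>
              T pr.1.1 pr.1.2) := by
      intro j k
      have hid : Matrix.vecMulVec (v j) (v k) + Matrix.vecMulVec (v k) (v j)
          = T 0 j.succ + T 0 k.succ - T j.succ k.succ := by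
        ext p q
        simp only [T, hv_def, Matrix.add_apply, Matrix.sub_apply, Matrix.vecMulVec_apply,
          Pi.sub_apply]
        ring
      rw [hid]
      have h0j := hTmem 0 j.succ (Fin.succ_pos j)
      have h0k := hTmem 0 k.succ (Fin.succ_pos k)
      have hjk : T j.succ k.succ ∈ Submodule.span ℝ
          (Set.range fun pr : {pr : Fin (d + 1) × Fin (d + 1) // pr.1 < pr.2} =>
            T pr.1.1 pr.1.2) := by
        rcases lt_trichotomy j k with h | h | h
        · exact hTmem _ _ (Fin.succ_lt_succ_iff.mpr h)
        · subst h
          have hz : T j.succ j.succ = 0 := by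
            ext p q
            simp [T, Matrix.vecMulVec_apply]
          rw [hz]
          exact Submodule.zero_mem _
        · have he : T j.succ k.succ = T k.succ j.succ := by
            ext p q
            simp only [T, Matrix.vecMulVec_apply, Pi.sub_apply]
            ring
          rw [he]
          exact hTmem _ _ (Fin.succ_lt_succ_iff.mpr h)
      exact Submodule.sub_mem _ (Submodule.add_mem _ h0j h0k) hjk
    intro A hA
    obtain ⟨B, hB⟩ : ∃ B : Module.Basis (Fin d) ℝ (Fin d → ℝ), ∀ j, B j = v j :=
      ⟨basisOfLinearIndependentOfCardEqFinrank hv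
        (by simp [Module.finrank_fintype_fun_eq_card]),
       fun j => congrFun (coe_basisOfLinearIndependentOfCardEqFinrank hv _) j⟩
    set P : Matrix (Fin d) (Fin d) ℝ := (Pi.basisFun ℝ (Fin d)).toMatrix B with hP_def
    have hP : ∀ p j, P p j = v j p := by
      intro p j
      rw [hP_def, Module.Basis.toMatrix_apply, Pi.basisFun_repr, hB]
    haveI : Invertible P := (Pi.basisFun ℝ (Fin d)).invertibleToMatrix B
    have hU : IsUnit P := isUnit_of_invertible P
    have hdet : IsUnit P.det := P.isUnit_iff_isUnit_det.mp hU
    set a : Matrix (Fin d) (Fin d) ℝ := P⁻¹ * A * (P⁻¹)ᵀ with ha_def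
    have hA' : A = P * a * Pᵀ := by
      have h1 : P * P⁻¹ = 1 := Matrix.mul_nonsing_inv P hdet
      have h2 : (P⁻¹)ᵀ * Pᵀ = 1 := by
        rw [← Matrix.transpose_mul, Matrix.mul_nonsing_inv P hdet, Matrix.transpose_one]
      have h3 : P * a * Pᵀ = (P * P⁻¹) * (A * ((P⁻¹)ᵀ * Pᵀ)) := by
        simp only [ha_def, Matrix.mul_assoc]
      rw [h3, h1, h2, Matrix.one_mul, Matrix.mul_one]
    have hsa : aᵀ = a := by
      simp only [ha_def, Matrix.transpose_mul, Matrix.transpose_transpose]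
      rw [hA.eq, Matrix.mul_assoc]
    have hsym : ∀ l m : Fin d, a l m = a m l := by
      intro l m
      conv_lhs => rw [← hsa]
      exact Matrix.transpose_apply a l m
    have hrep : A = ∑ j : Fin d, ∑ k : Fin d, a j k • Matrix.vecMulVec (v j) (v k) := by
      conv_lhs => rw [hA']
      ext p q
      simp only [Matrix.sum_apply, Matrix.smul_apply, Matrix.vecMulVec_apply, smul_eq_mul,
        Matrix.mul_apply, Matrix.transpose_apply, Finset.sum_mul]
      rw [Finset.sum_comm]
      refine Finset.sum_congr rfl fun j _ => Finset.sum_congr rfl fun k _ => ?_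
      rw [hP, hP]
      ring
    have hswap : ∑ j : Fin d, ∑ k : Fin d, a j k • Matrix.vecMulVec (v k) (v j)
        = ∑ j : Fin d, ∑ k : Fin d, a j k • Matrix.vecMulVec (v j) (v k) := by
      rw [Finset.sum_comm]
      exact Finset.sum_congr rfl fun j _ => Finset.sum_congr rfl fun k _ => by rw [hsym]
    have h2A : (2 : ℝ) • A = ∑ j : Fin d, ∑ k : Fin d, a j k •
        (Matrix.vecMulVec (v j) (v k) + Matrix.vecMulVec (v k) (v j)) := by
      simp only [smul_add, Finset.sum_add_distrib]
      rw [hswap, ← hrep, two_smul]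
    have hA2 : A = (2 : ℝ)⁻¹ • ((2 : ℝ) • A) := by
      rw [smul_smul]; norm_num
    rw [hA2, h2A]
    exact Submodule.smul_mem _ _ (Submodule.sum_mem _ fun j _ =>
      Submodule.sum_mem _ fun k _ => Submodule.smul_mem _ _ (hW j k))
  -- span of the N family
  have hNsym : ∀ pr : {pr : Fin (d + 1) × Fin (d + 1) // pr.1 < pr.2},
      (N pr.1.1 pr.1.2).IsSymm := by
    intro pr
    show (N pr.1.1 pr.1.2)ᵀ = N pr.1.1 pr.1.2
    ext p q
    simp only [N, Matrix.transpose_apply, Matrix.smul_apply, Matrix.add_apply,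
      Matrix.vecMulVec_apply, smul_eq_mul]
    ring
  have hle : Submodule.span ℝ
      (Set.range fun pr : {pr : Fin (d + 1) × Fin (d + 1) // pr.1 < pr.2} =>
        N pr.1.1 pr.1.2) ≤
      Submodule.span ℝ
      (Set.range fun pr : {pr : Fin (d + 1) × Fin (d + 1) // pr.1 < pr.2} =>
        T pr.1.1 pr.1.2) := by
    rw [Submodule.span_le]
    rintro _ ⟨pr, rfl⟩
    exact hspanT _ (hNsym pr)
  have heq : Submodule.span ℝ
      (Set.range fun pr : {pr : Fin (d + 1) × Fin (d + 1) // pr.1 < pr.2} =>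
        N pr.1.1 pr.1.2) =
      Submodule.span ℝ
      (Set.range fun pr : {pr : Fin (d + 1) × Fin (d + 1) // pr.1 < pr.2} =>
        T pr.1.1 pr.1.2) :=
    Submodule.eq_of_le_of_finrank_eq hle
      (by rw [finrank_span_eq_card hNli, finrank_span_eq_card hTli])
  exact ⟨key, hTli, hspanT, hNli, fun A hA => heq ▸ hspanT A hA⟩
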